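/- arXiv:1202.3985 — 2 statements merged into one kernel-verified Lean document; each statement's English description precedes it below -/
import Mathlib

section
/- Let p_1,...,p_n be distinct primes with product M, M_i = M/p_i, a_i M_i ≡ 1 (mod p_i), and let c be an integer with M > 4|c| and c ≡ c_i (mod p_i) with 0 ≤ c_i < p_i. If r is the nearest integer to Σ_i c_i a_i / p_i, then c = Σ_i c_i a_i M_i − r M. -/
/-- **Explicit CRT (Bernstein).**  With distinct primes `p i` of product `M > 4|c|`, CRT data
`Mi i = M / p i` and `a i * Mi i ≡ 1 (mod p i)`, residues `cres i ≡ c (mod p i)` with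
`0 ≤ cres i < p i`, and `r` the nearest integer to `∑ i, cres i * a i / p i`, we have
`c = ∑ i, cres i * a i * Mi i − r * M`. -/
theorem explicit_crt (n : ℕ) (p : Fin n → ℕ)
    (hp : ∀ i, (p i).Prime) (hdist : Function.Injective p)
    (M : ℕ) (hM : M = ∏ i, p i)
    (Mi : Fin n → ℕ) (hMi : ∀ i, Mi i = M / p i)
    (a : Fin n → ℤ) (ha : ∀ i, a i * (Mi i : ℤ) ≡ 1 [ZMOD (p i)])
    (c : ℤ) (hsize : 4 * |c| < M)
    (cres : Fin n → ℤ) (hc : ∀ i, c ≡ cres i [ZMOD (p i)])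
    (hlo : ∀ i, 0 ≤ cres i) (hhi : ∀ i, cres i < p i)
    (r : ℤ) (hr : r = round (∑ i, (cres i * a i : ℝ) / (p i : ℝ))) :
    c = ∑ i, cres i * a i * (Mi i : ℤ) - r * M := by
  have hMpos : 0 < M := by
    rw [hM]; exact Finset.prod_pos fun i _ => (hp i).pos
  have hpdvdM : ∀ i, p i ∣ M := fun i => hM ▸ Finset.dvd_prod_of_mem p (Finset.mem_univ i)
  have hMimul : ∀ i, Mi i * p i = M := by
    intro i
    rw [hMi i]
    exact Nat.div_mul_cancel (hpdvdM i)
  have hMipos : ∀ i, 0 < Mi i := by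
    intro i
    rcases Nat.eq_zero_or_pos (Mi i) with h | h
    · exfalso; have := hMimul i; rw [h] at this; simp at this; omega
    · exact h
  set S := ∑ i, cres i * a i * (Mi i : ℤ) with hS
  -- p i divides Mi j for j ≠ i
  have hpMi : ∀ i j, j ≠ i → p i ∣ Mi j := by
    intro i j hij
    have hcop : Nat.Coprime (p i) (p j) :=
      (Nat.coprime_primes (hp i) (hp j)).mpr (fun h => hij (hdist h).symm)
    have : p i ∣ Mi j * p j := (hMimul j) ▸ hpdvdM i
    exact (Nat.Coprime.dvd_of_dvd_mul_right hcop this)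
  have hdvd : ∀ i, (p i : ℤ) ∣ S - c := by
    intro i
    have h1 : (p i : ℤ) ∣ a i * (Mi i : ℤ) - 1 := (ha i).symm.dvd
    have h2 : (p i : ℤ) ∣ cres i - c := (hc i).dvd
    have h3 : (p i : ℤ) ∣ ∑ j ∈ Finset.univ.erase i, cres j * a j * (Mi j : ℤ) := by
      apply Finset.dvd_sum
      intro j hj
      have : (p i : ℤ) ∣ (Mi j : ℤ) :=
        Int.natCast_dvd_natCast.mpr (hpMi i j (Finset.ne_of_mem_erase hj))
      exact this.mul_left _
    have hsplit : S = cres i * a i * (Mi i : ℤ) +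
        ∑ j ∈ Finset.univ.erase i, cres j * a j * (Mi j : ℤ) :=
      (Finset.add_sum_erase _ _ (Finset.mem_univ i)).symm
    have : S - c = cres i * (a i * (Mi i : ℤ) - 1) + (cres i - c) +
        ∑ j ∈ Finset.univ.erase i, cres j * a j * (Mi j : ℤ) := by
      rw [hsplit]; ring
    rw [this]
    exact ((h1.mul_left _).add h2).add h3
  have hMdvd : (M : ℤ) ∣ S - c := by
    have : ((M : ℤ)) = ∏ i, (p i : ℤ) := by rw [hM]; push_cast; ring
    rw [this]
    apply Finset.prod_dvd_of_coprime
    · intro i _ j _ hij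
      rw [Function.onFun, Nat.isCoprime_iff_coprime]
      exact (Nat.coprime_primes (hp i) (hp j)).mpr (fun h => hij (hdist h))
    · exact fun i _ => hdvd i
  obtain ⟨k, hk⟩ := hMdvd
  -- the real sum equals S / M
  have hMR : (0 : ℝ) < (M : ℝ) := by exact_mod_cast hMpos
  have hsum : (∑ i, (cres i * a i : ℝ) / (p i : ℝ)) = (S : ℝ) / (M : ℝ) := by
    rw [hS]
    push_cast
    rw [Finset.sum_div]
    apply Finset.sum_congr rfl
    intro i _
    have hpi : (0 : ℝ) < (p i : ℝ) := by exact_mod_cast (hp i).pos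
    have hMii : (0 : ℝ) < (Mi i : ℝ) := by exact_mod_cast hMipos i
    have hMeq : (M : ℝ) = (Mi i : ℝ) * (p i : ℝ) := by exact_mod_cast (hMimul i).symm
    rw [hMeq]
    field_simp
  have hSM : (S : ℝ) / (M : ℝ) = (k : ℝ) + (c : ℝ) / (M : ℝ) := by
    have hSeq : (S : ℝ) = (c : ℝ) + (M : ℝ) * (k : ℝ) := by
      have : S = c + M * k := by omega
      exact_mod_cast congrArg (fun z : ℤ => (z : ℝ)) this
    rw [hSeq]
    field_simp
    ring
  have hround : r = k := by
    rw [hr, hsum, hSM, round_intCast_add]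
    have h0 : round ((c : ℝ) / (M : ℝ)) = 0 := by
      rw [round_eq_zero_iff]
      constructor
      · have : |(c : ℝ) / (M : ℝ)| < 1 / 2 := by
          rw [abs_div, abs_of_pos hMR, div_lt_iff₀ hMR]
          have : (4 * |c| : ℝ) < (M : ℝ) := by exact_mod_cast hsize
          push_cast at this ⊢
          nlinarith [abs_nonneg (c : ℝ), hMR]
        linarith [(abs_lt.mp this).1]
      · have : |(c : ℝ) / (M : ℝ)| < 1 / 2 := by
          rw [abs_div, abs_of_pos hMR, div_lt_iff₀ hMR]
          have : (4 * |c| : ℝ) < (M : ℝ) := by exact_mod_cast hsize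
          push_cast at this ⊢
          nlinarith [abs_nonneg (c : ℝ), hMR]
        exact (abs_lt.mp this).2
    rw [h0, add_zero]
  rw [hround]
  linear_combination -hk
end

section
/- Let p and q be primes and c an integer with |c| < M/4 where M is a product of distinct primes p_1,...,p_n each coprime to q, with CRT data M_i = M/p_i and a_i M_i ≡ 1 (mod p_i), residues c_i ≡ c (mod p_i), 0 ≤ c_i < p_i, and r the nearest integer to Σ_i c_i a_i / p_i. Then c mod q equals (Σ_i c_i (a_i M_i mod q) − r (M mod q)) mod q. -/
/-- **Explicit CRT modulo `q`.**  Let `q` be a prime and `c` an integer with `4|c| < M`, where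
`M` is a product of distinct primes `p i`, each coprime to `q`, with CRT data `Mi i = M / p i`
and `a i * Mi i ≡ 1 (mod p i)`, residues `cres i ≡ c (mod p i)` with `0 ≤ cres i < p i`, and
`r` the nearest integer to `∑ i, cres i * a i / p i`.  Then
`c ≡ ∑ i, cres i * ((a i * Mi i) mod q) - r * (M mod q) (mod q)`. -/
theorem explicit_crt_mod_q (q : ℕ) (hq : q.Prime)
    (n : ℕ) (p : Fin n → ℕ)
    (hp : ∀ i, (p i).Prime) (hdist : Function.Injective p)
    (hcop : ∀ i, Nat.Coprime (p i) q)
    (M : ℕ) (hM : M = ∏ i, p i)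
    (Mi : Fin n → ℕ) (hMi : ∀ i, Mi i = M / p i)
    (a : Fin n → ℤ) (ha : ∀ i, a i * (Mi i : ℤ) ≡ 1 [ZMOD (p i)])
    (c : ℤ) (hsize : 4 * |c| < M)
    (cres : Fin n → ℤ) (hc : ∀ i, c ≡ cres i [ZMOD (p i)])
    (hlo : ∀ i, 0 ≤ cres i) (hhi : ∀ i, cres i < p i)
    (r : ℤ) (hr : r = round (∑ i, (cres i * a i : ℝ) / (p i : ℝ))) :
    c ≡ ∑ i, cres i * ((a i * (Mi i : ℤ)) % q) - r * ((M : ℤ) % q) [ZMOD q] := by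
  have hMpos : 0 < M := by
    rw [hM]; exact Finset.prod_pos fun i _ => (hp i).pos
  -- `Mi i` is the product over the erased index set
  have hMi' : ∀ i, Mi i = ∏ j ∈ Finset.univ.erase i, p j := by
    intro i
    have h1 : p i * ∏ j ∈ Finset.univ.erase i, p j = M := by
      rw [hM, Finset.mul_prod_erase _ _ (Finset.mem_univ i)]
    rw [hMi i, ← h1, Nat.mul_div_cancel_left _ (hp i).pos]
  have hfac : ∀ i, M = p i * Mi i := by
    intro i
    rw [hMi' i, hM, Finset.mul_prod_erase _ _ (Finset.mem_univ i)]
  set S : ℤ := ∑ i, cres i * (a i * (Mi i : ℤ)) with hS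
  -- each prime divides S - c
  have hdvd : ∀ j, (p j : ℤ) ∣ S - c := by
    intro j
    have hrw : S - c = ∑ i, (cres i * (a i * (Mi i : ℤ)) - if i = j then c else 0) := by
      rw [Finset.sum_sub_distrib, Finset.sum_ite_eq' Finset.univ j (fun _ => c)]
      simp [hS]
    rw [hrw]
    refine Finset.dvd_sum fun i _ => ?_
    by_cases hij : i = j
    · subst hij
      simp only [if_pos rfl]
      have h1 : cres i * (a i * (Mi i : ℤ)) ≡ c [ZMOD (p i)] := by
        calc cres i * (a i * (Mi i : ℤ)) ≡ cres i * 1 [ZMOD (p i)] :=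
              Int.ModEq.mul_left _ (ha i)
          _ = cres i := mul_one _
          _ ≡ c [ZMOD (p i)] := (hc i).symm
      exact (Int.modEq_iff_dvd.mp h1.symm)
    · simp only [if_neg hij, sub_zero]
      have hpj : (p j : ℤ) ∣ (Mi i : ℤ) := by
        have : p j ∣ Mi i := by
          rw [hMi' i]
          exact Finset.dvd_prod_of_mem p (by simp [Finset.mem_erase, Ne.symm hij])
        exact_mod_cast Int.natCast_dvd_natCast.mpr this
      exact Dvd.dvd.mul_left (Dvd.dvd.mul_left hpj _) _
  -- the primes are pairwise coprime as integers, so M divides S - c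
  have hMdvd : (M : ℤ) ∣ S - c := by
    have : (∏ i, (p i : ℤ)) ∣ S - c := by
      refine Finset.prod_dvd_of_coprime ?_ fun i _ => hdvd i
      intro i _ j _ hij
      have : Nat.Coprime (p i) (p j) :=
        (Nat.coprime_primes (hp i) (hp j)).mpr fun h => hij (hdist h)
      exact Int.isCoprime_iff_gcd_eq_one.mpr (by exact_mod_cast this)
    rwa [hM, Nat.cast_prod]
  obtain ⟨k, hk⟩ := hMdvd
  -- identify r with k using the rounding estimate
  have hMne : (M : ℝ) ≠ 0 := by exact_mod_cast hMpos.ne'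
  have hsum : (∑ i, (cres i * a i : ℝ) / (p i : ℝ)) = (S : ℝ) / (M : ℝ) := by
    rw [eq_div_iff hMne, Finset.sum_mul]
    push_cast [hS]
    refine Finset.sum_congr rfl fun i _ => ?_
    have hpi : (p i : ℝ) ≠ 0 := by exact_mod_cast (hp i).pos.ne'
    have hMeq : (M : ℝ) = (p i : ℝ) * (Mi i : ℝ) := by exact_mod_cast hfac i
    field_simp [hMeq]
    rw [hMeq]; ring
  have hSr : (S : ℝ) / (M : ℝ) = (c : ℝ) / (M : ℝ) + (k : ℝ) := by
    have : (S : ℝ) = (c : ℝ) + (M : ℝ) * (k : ℝ) := by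
      have := hk
      have h2 : (S : ℝ) - c = (M : ℝ) * k := by exact_mod_cast congrArg (Int.cast : ℤ → ℝ) hk
      linarith
    rw [this]
    field_simp
  have hrk : r = k := by
    rw [hr, hsum, hSr, round_add_intCast]
    have h0 : round ((c : ℝ) / (M : ℝ)) = 0 := by
      rw [round_eq_zero_iff, Set.mem_Ico]
      have h4 : (4 : ℝ) * |(c : ℝ)| < M := by exact_mod_cast hsize
      have hMR : (0 : ℝ) < M := by exact_mod_cast hMpos
      constructor
      · rw [le_div_iff₀ hMR]
        nlinarith [neg_abs_le (c : ℝ)]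
      · rw [div_lt_iff₀ hMR]
        nlinarith [le_abs_self (c : ℝ)]
    rw [h0, zero_add]
  -- hence c = S - r * M
  have hcSM : c = S - r * (M : ℤ) := by
    rw [hrk]
    linarith [hk]
  -- conclude modulo q
  rw [← ZMod.intCast_eq_intCast_iff, hcSM]
  simp only [hS]
  push_cast [ZMod.intCast_mod]
  ring
end
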